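/- arXiv:2307.02121 — 4 statements merged into one kernel-verified Lean document; each statement's English description precedes it below -/
import Mathlib

section
/- Let a⁺ and a be linear operators on a space of sequences (indexed by ℕ) such that a⁺ raises the index and a lowers it (analogues of creation and annihilation operators), and suppose the bilinear pairing (b, f) = ∑ₙ (1/n!) ⟨bₙ, fₙ⟩ satisfies (a⁺ b, f) = (b, a f). Then (b, f) = (e^{-a⁺} b, e^{a} f) whenever all series converge, where e^{±a⁺} and e^{a} are defined by their exponential series (which terminate componentwise). -/
-- coefficient lemma
lemma coeff_antidiag (n : ℕ) :
    (∑ q ∈ Finset.HasAntidiagonal.antidiagonal n,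
      ((-1:ℝ)^q.1 / q.1.factorial) * (1 / q.2.factorial)) = if n = 0 then 1 else 0 := by
  rw [Finset.Nat.sum_antidiagonal_eq_sum_range_succ_mk]
  have key : ∀ j ∈ Finset.range (n+1),
      ((-1:ℝ)^j / j.factorial) * (1 / (n-j).factorial)
        = ((-1:ℝ)^j * n.choose j) / n.factorial := by
    intro j hj
    rw [Finset.mem_range] at hj
    have hjn : j ≤ n := Nat.lt_succ_iff.mp hj
    have h := Nat.choose_mul_factorial_mul_factorial hjn
    have hn : (n.factorial : ℝ) = (n.choose j : ℝ) * j.factorial * (n-j).factorial := by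
      exact_mod_cast h.symm
    have h1 : (j.factorial : ℝ) ≠ 0 := Nat.cast_ne_zero.mpr j.factorial_ne_zero
    have h2 : ((n-j).factorial : ℝ) ≠ 0 := Nat.cast_ne_zero.mpr (n-j).factorial_ne_zero
    have h3 : (n.factorial : ℝ) ≠ 0 := Nat.cast_ne_zero.mpr n.factorial_ne_zero
    field_simp
    rw [hn]; ring
  rw [Finset.sum_congr rfl key, ← Finset.sum_div]
  have := Int.alternating_sum_range_choose (n := n)
  have hcast : (∑ j ∈ Finset.range (n+1), ((-1:ℝ)^j * n.choose j))
      = ((if n = 0 then 1 else 0 : ℤ) : ℝ) := by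
    rw [← this]; push_cast; rfl
  rw [hcast]
  rcases eq_or_ne n 0 with h | h <;> simp [h]

lemma exp_neg_exp_apply {W : Type*} [AddCommGroup W] [Module ℝ W]
    (a : W →ₗ[ℝ] W) (f : W) (M L : ℕ) (hM : 1 ≤ M) (hML : M ≤ L)
    (hf : ∀ k, M ≤ k → (a ^ k) f = 0) :
    (∑ j ∈ Finset.range L, ∑ k ∈ Finset.range L,
      (((-1:ℝ)^j / j.factorial) * (1 / k.factorial)) • (a ^ (j + k)) f) = f := by
  rw [← Finset.sum_product']
  have hsplit := Finset.sum_filter_add_sum_filter_not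
    (Finset.range L ×ˢ Finset.range L) (fun q => q.1 + q.2 < M)
    (fun q : ℕ × ℕ => (((-1:ℝ)^q.1 / q.1.factorial) * (1 / q.2.factorial)) • (a ^ (q.1 + q.2)) f)
  rw [← hsplit]
  have h2 : (∑ q ∈ (Finset.range L ×ˢ Finset.range L).filter (fun q => ¬ q.1 + q.2 < M),
      (((-1:ℝ)^q.1 / q.1.factorial) * (1 / q.2.factorial)) • (a ^ (q.1 + q.2)) f) = 0 := by
    apply Finset.sum_eq_zero
    intro q hq
    rw [Finset.mem_filter] at hq
    rw [hf _ (not_lt.mp hq.2), smul_zero]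
  rw [h2, add_zero]
  have hset : (Finset.range L ×ˢ Finset.range L).filter (fun q => q.1 + q.2 < M)
      = (Finset.range M).biUnion Finset.HasAntidiagonal.antidiagonal := by
    ext q
    simp only [Finset.mem_filter, Finset.mem_product, Finset.mem_range, Finset.mem_biUnion,
      Finset.HasAntidiagonal.mem_antidiagonal]
    constructor
    · rintro ⟨⟨_, _⟩, h⟩
      exact ⟨q.1 + q.2, h, rfl⟩
    · rintro ⟨n, hn, hq⟩
      omega
  rw [hset, Finset.sum_biUnion]
  · have : ∀ n ∈ Finset.range M, (∑ q ∈ Finset.HasAntidiagonal.antidiagonal n,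
        (((-1:ℝ)^q.1 / q.1.factorial) * (1 / q.2.factorial)) • (a ^ (q.1 + q.2)) f)
        = (if n = 0 then 1 else 0 : ℝ) • (a ^ n) f := by
      intro n hn
      rw [← coeff_antidiag, Finset.sum_smul]
      apply Finset.sum_congr rfl
      intro q hq
      rw [Finset.HasAntidiagonal.mem_antidiagonal] at hq
      rw [hq]
    rw [Finset.sum_congr rfl this, Finset.sum_eq_single 0]
    · simp
    · intro n _ hn; simp [hn]
    · intro h; exact absurd (Finset.mem_range.mpr hM) h
  · intro x hx y hy hxy
    intro s hsx hsy q hq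
    have h1 := Finset.HasAntidiagonal.mem_antidiagonal.mp (hsx hq)
    have h2 := Finset.HasAntidiagonal.mem_antidiagonal.mp (hsy hq)
    exact (hxy (h1.symm.trans h2)).elim


lemma adj_pow {V W : Type*} [AddCommGroup V] [Module ℝ V] [AddCommGroup W] [Module ℝ W]
    (aP : V →ₗ[ℝ] V) (a : W →ₗ[ℝ] W) (p : V →ₗ[ℝ] W →ₗ[ℝ] ℝ)
    (hadj : ∀ (b : V) (f : W), p (aP b) f = p b (a f)) :
    ∀ (j : ℕ) (b : V) (w : W), p ((aP ^ j) b) w = p b ((a ^ j) w) := by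
  intro j
  induction j with
  | zero => intro b w; simp
  | succ j ih =>
    intro b w
    have h1 : (aP ^ (j+1)) b = (aP ^ j) (aP b) := by
      rw [pow_succ]; rfl
    have h2 : (a ^ (j+1)) w = a ((a ^ j) w) := by
      rw [pow_succ']; rfl
    rw [h1, h2, ih (aP b) w, hadj]


/-- If `a⁺` and `a` are adjoint with respect to a bilinear pairing `p`, i.e.
`p (a⁺ b) f = p b (a f)`, and the exponential series terminate on `b` and `f`
(so that all series converge), then `p b f = p (e^{-a⁺} b) (e^{a} f)`. -/
theorem pairing_exp_creation_annihilation
    (V W : Type*) [AddCommGroup V] [Module ℝ V] [AddCommGroup W] [Module ℝ W]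
    (aP : V →ₗ[ℝ] V) (a : W →ₗ[ℝ] W) (p : V →ₗ[ℝ] W →ₗ[ℝ] ℝ)
    (hadj : ∀ (b : V) (f : W), p (aP b) f = p b (a f))
    (b : V) (f : W) (N M : ℕ)
    (hb : ∀ k, N ≤ k → (aP ^ k) b = 0) (hf : ∀ k, M ≤ k → (a ^ k) f = 0) :
    p b f = p (∑ k ∈ Finset.range N, ((-1 : ℝ) ^ k / k.factorial) • (aP ^ k) b)
              (∑ k ∈ Finset.range M, ((1 : ℝ) / k.factorial) • (a ^ k) f) := by
  rcases Nat.eq_zero_or_pos N with hN | hN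
  · subst hN
    have hb0 : b = 0 := by simpa using hb 0 (le_refl 0)
    simp [hb0]
  rcases Nat.eq_zero_or_pos M with hM | hM
  · subst hM
    have hf0 : f = 0 := by simpa using hf 0 (le_refl 0)
    simp [hf0]
  set L := N + M with hL
  -- extend sums to range L
  have hbext : (∑ k ∈ Finset.range N, ((-1 : ℝ) ^ k / k.factorial) • (aP ^ k) b)
      = ∑ k ∈ Finset.range L, ((-1 : ℝ) ^ k / k.factorial) • (aP ^ k) b := by
    apply Finset.sum_subset (Finset.range_subset_range.mpr (by omega))
    intro k _ hk
    rw [Finset.mem_range, not_lt] at hk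
    rw [hb k hk, smul_zero]
  have hfext : (∑ k ∈ Finset.range M, ((1 : ℝ) / k.factorial) • (a ^ k) f)
      = ∑ k ∈ Finset.range L, ((1 : ℝ) / k.factorial) • (a ^ k) f := by
    apply Finset.sum_subset (Finset.range_subset_range.mpr (by omega))
    intro k _ hk
    rw [Finset.mem_range, not_lt] at hk
    rw [hf k hk, smul_zero]
  rw [hbext, hfext]
  have key : (p (∑ j ∈ Finset.range L, ((-1 : ℝ) ^ j / j.factorial) • (aP ^ j) b))
      (∑ k ∈ Finset.range L, ((1 : ℝ) / k.factorial) • (a ^ k) f)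
      = p b (∑ k ∈ Finset.range L, ∑ j ∈ Finset.range L,
          ((((-1:ℝ)^j / j.factorial) * (1 / k.factorial)) • (a ^ (j + k)) f)) := by
    simp only [map_sum, LinearMap.sum_apply, map_smul, LinearMap.smul_apply, smul_eq_mul]
    apply Finset.sum_congr rfl
    intro k _
    rw [Finset.mul_sum]
    apply Finset.sum_congr rfl
    intro j _
    rw [adj_pow aP a p hadj j b]
    have hpow : (a ^ j) ((a ^ k) f) = (a ^ (j + k)) f := by
      rw [pow_add]; rfl
    rw [hpow]
    ring
  rw [key, Finset.sum_comm, exp_neg_exp_apply a f M L hM (by omega) hf]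
end

section
/- Suppose cumulants 𝔄_{1+n}(t) of an isometric group of operators satisfy the bound ‖𝔄_{1+n}(t) b‖ ≤ n! e^{n+2} ‖b‖ for all n ≥ 0. Then the solution expansion Bₛ(t) = ∑_{n=0}^{s} (1/n!) ∑_{j₁≠…≠jₙ} 𝔄_{1+n}(t) B⁰_{s-n} satisfies, in the norm ‖B‖_{C_γ} = max_{s≥0} (γ^s/s!) sup |Bₛ|, the estimate ‖B(t)‖_{C_γ} ≤ e²(1 - γe)^{-1} ‖B(0)‖_{C_γ} provided 0 < γ < e^{-1}. -/
/-- If the cumulant operators `𝔄_{1+n}(t)` (here `Op s n j`, acting on the initial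
datum `B⁰_{s-n}` inserted at the ordered tuple of distinct indices `j`) satisfy the
bound `‖𝔄_{1+n}(t) b‖ ≤ n! e^(n+2) ‖b‖`, then the solution expansion
`Bₛ(t) = ∑_{n=0}^{s} (1/n!) ∑_{j₁≠…≠jₙ} 𝔄_{1+n}(t) B⁰_{s-n}` of the dual BBGKY
hierarchy satisfies `‖B(t)‖_{C_γ} ≤ e²(1-γe)⁻¹ ‖B(0)‖_{C_γ}` provided `0 < γ < e⁻¹`. -/
theorem dual_BBGKY_solution_estimate
    (V : ℕ → Type*) [∀ s, NormedAddCommGroup (V s)] [∀ s, NormedSpace ℝ (V s)]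
    (γ : ℝ) (hγ0 : 0 < γ) (hγ : γ < (Real.exp 1)⁻¹)
    (Op : (s : ℕ) → (n : ℕ) → (Fin n ↪ Fin s) → V (s - n) →L[ℝ] V s)
    (hOp : ∀ (s n : ℕ) (j : Fin n ↪ Fin s),
      ‖Op s n j‖ ≤ n.factorial * Real.exp (n + 2))
    (B0 : (s : ℕ) → V s) (M : ℝ)
    (hM : ∀ s : ℕ, γ ^ s / s.factorial * ‖B0 s‖ ≤ M) :
    ∀ s : ℕ, γ ^ s / s.factorial *
        ‖∑ n ∈ Finset.range (s + 1), ((1 : ℝ) / n.factorial) •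
            ∑ j : Fin n ↪ Fin s, Op s n j (B0 (s - n))‖
      ≤ Real.exp 2 * (1 - γ * Real.exp 1)⁻¹ * M := by
  have he : (0:ℝ) < Real.exp 1 := Real.exp_pos 1
  have hr0 : (0:ℝ) ≤ γ * Real.exp 1 := by positivity
  have hr1 : γ * Real.exp 1 < 1 := by
    calc γ * Real.exp 1 < (Real.exp 1)⁻¹ * Real.exp 1 :=
          mul_lt_mul_of_pos_right hγ he
      _ = 1 := inv_mul_cancel₀ he.ne'
  have hM0 : 0 ≤ M := le_trans (by positivity) (hM 0)
  intro s
  set r : ℝ := γ * Real.exp 1 with hr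
  -- per-term bound
  have key : ∀ n ∈ Finset.range (s+1),
      γ ^ s / s.factorial *
        ‖((1 : ℝ) / n.factorial) • ∑ j : Fin n ↪ Fin s, Op s n j (B0 (s - n))‖
      ≤ Real.exp 2 * r ^ n * M := by
    intro n hn
    have hns : n ≤ s := Nat.lt_succ_iff.mp (Finset.mem_range.mp hn)
    have hcard : (Fintype.card (Fin n ↪ Fin s) : ℝ) = s.descFactorial n := by
      rw [Fintype.card_embedding_eq, Fintype.card_fin, Fintype.card_fin]
    have hsum : ‖∑ j : Fin n ↪ Fin s, Op s n j (B0 (s - n))‖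
        ≤ (s.descFactorial n : ℝ) * (n.factorial * Real.exp (n + 2) * ‖B0 (s - n)‖) := by
      calc ‖∑ j : Fin n ↪ Fin s, Op s n j (B0 (s - n))‖
          ≤ ∑ j : Fin n ↪ Fin s, ‖Op s n j (B0 (s - n))‖ := norm_sum_le _ _
        _ ≤ ∑ _j : Fin n ↪ Fin s, n.factorial * Real.exp (n + 2) * ‖B0 (s - n)‖ := by
            refine Finset.sum_le_sum fun j _ => ?_
            calc ‖Op s n j (B0 (s - n))‖ ≤ ‖Op s n j‖ * ‖B0 (s - n)‖ :=
                  (Op s n j).le_opNorm _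
              _ ≤ n.factorial * Real.exp (n + 2) * ‖B0 (s - n)‖ :=
                  mul_le_mul_of_nonneg_right (hOp s n j) (norm_nonneg _)
        _ = (s.descFactorial n : ℝ) * (n.factorial * Real.exp (n + 2) * ‖B0 (s - n)‖) := by
            rw [Finset.sum_const, Finset.card_univ, nsmul_eq_mul, hcard]
    have hnorm : ‖((1 : ℝ) / n.factorial) • ∑ j : Fin n ↪ Fin s, Op s n j (B0 (s - n))‖
        = (1 / n.factorial) * ‖∑ j : Fin n ↪ Fin s, Op s n j (B0 (s - n))‖ := by
      rw [norm_smul, Real.norm_eq_abs, abs_of_nonneg (by positivity)]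
    have hfact : ((s - n).factorial : ℝ) * (s.descFactorial n : ℝ) = s.factorial := by
      rw [← Nat.cast_mul, Nat.factorial_mul_descFactorial hns]
    have hexp : Real.exp (n + 2) = Real.exp 2 * (Real.exp 1) ^ n := by
      rw [← Real.exp_nat_mul, mul_one, ← Real.exp_add]
      ring_nf
    have hγpow : γ ^ s = γ ^ n * γ ^ (s - n) := by
      rw [← pow_add, Nat.add_sub_cancel' hns]
    have key_eq : γ ^ s / s.factorial *
        ((1 / n.factorial) * ((s.descFactorial n : ℝ) *
          (n.factorial * Real.exp (n + 2) * ‖B0 (s - n)‖)))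
        = Real.exp 2 * r ^ n * (γ ^ (s - n) / (s - n).factorial * ‖B0 (s - n)‖) := by
      have h1 : ((s).factorial : ℝ) ≠ 0 := Nat.cast_ne_zero.mpr s.factorial_ne_zero
      have h2 : ((n).factorial : ℝ) ≠ 0 := Nat.cast_ne_zero.mpr n.factorial_ne_zero
      have h3 : ((s - n).factorial : ℝ) ≠ 0 := Nat.cast_ne_zero.mpr (s - n).factorial_ne_zero
      rw [hexp, hγpow, hr, mul_pow]
      field_simp
      linear_combination ‖B0 (s - n)‖ * hfact
    calc γ ^ s / s.factorial *
          ‖((1 : ℝ) / n.factorial) • ∑ j : Fin n ↪ Fin s, Op s n j (B0 (s - n))‖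
        ≤ γ ^ s / s.factorial * ((1 / n.factorial) * ((s.descFactorial n : ℝ) *
            (n.factorial * Real.exp (n + 2) * ‖B0 (s - n)‖))) := by
          rw [hnorm]
          have : (0:ℝ) ≤ γ ^ s / s.factorial := by positivity
          exact mul_le_mul_of_nonneg_left
            (mul_le_mul_of_nonneg_left hsum (by positivity)) this
      _ = Real.exp 2 * r ^ n * (γ ^ (s - n) / (s - n).factorial * ‖B0 (s - n)‖) := key_eq
      _ ≤ Real.exp 2 * r ^ n * M := by
          refine mul_le_mul_of_nonneg_left (hM (s - n)) (by positivity)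
  -- sum up
  have hgeom : ∑ n ∈ Finset.range (s + 1), r ^ n ≤ (1 - r)⁻¹ := by
    have hsummable : Summable (fun n : ℕ => r ^ n) := summable_geometric_of_lt_one hr0 hr1
    calc ∑ n ∈ Finset.range (s + 1), r ^ n ≤ ∑' n : ℕ, r ^ n :=
          Summable.sum_le_tsum _ (fun i _ => by positivity) hsummable
      _ = (1 - r)⁻¹ := tsum_geometric_of_lt_one hr0 hr1
  calc γ ^ s / s.factorial *
        ‖∑ n ∈ Finset.range (s + 1), ((1 : ℝ) / n.factorial) •
            ∑ j : Fin n ↪ Fin s, Op s n j (B0 (s - n))‖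
      ≤ ∑ n ∈ Finset.range (s + 1), γ ^ s / s.factorial *
          ‖((1 : ℝ) / n.factorial) • ∑ j : Fin n ↪ Fin s, Op s n j (B0 (s - n))‖ := by
        rw [← Finset.mul_sum]
        exact mul_le_mul_of_nonneg_left (norm_sum_le _ _) (by positivity)
    _ ≤ ∑ n ∈ Finset.range (s + 1), Real.exp 2 * r ^ n * M := Finset.sum_le_sum key
    _ = Real.exp 2 * M * ∑ n ∈ Finset.range (s + 1), r ^ n := by
        rw [Finset.mul_sum]; exact Finset.sum_congr rfl fun n _ => by ring
    _ ≤ Real.exp 2 * M * (1 - r)⁻¹ :=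
        mul_le_mul_of_nonneg_left hgeom (by positivity)
    _ = Real.exp 2 * (1 - γ * Real.exp 1)⁻¹ * M := by rw [hr]; ring
end

section
/- Suppose cumulants 𝔄*_{1+n}(t) of groups of isometric operators on L¹ spaces satisfy ‖𝔄*_{1+n}(t) f_{s+n}‖_{L¹} ≤ n! e^{n+2} ‖f_{s+n}‖_{L¹}. Then for α > e, the series Fₛ(t) = ∑_{n=0}^{∞} (1/n!) ∫ 𝔄*_{1+n}(t) F⁰_{s+n} dx_{s+1}…dx_{s+n} converges in the norm ‖F‖_{L¹_α} = ∑ₙ αⁿ ‖Fₙ‖_{L¹}, and ‖F(t)‖_{L¹_α} ≤ e²(1 - e/α)^{-1} ‖F(0)‖_{L¹_α}. -/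
/-- If the cumulant operators `𝔄*_{1+n}(t)` (here `Op s n`, including the integration
over the variables `x_{s+1},…,x_{s+n}`, mapping the `(s+n)`-particle component to the
`s`-particle component) satisfy `‖𝔄*_{1+n}(t) f_{s+n}‖ ≤ n! e^(n+2) ‖f_{s+n}‖`, then for
`α > e` the series `Fₛ(t) = ∑_{n=0}^∞ (1/n!) 𝔄*_{1+n}(t) F⁰_{s+n}` converges in the norm
`‖F‖_{L¹_α} = ∑ₛ α^s ‖Fₛ‖`, and `‖F(t)‖_{L¹_α} ≤ e² (1 - e/α)⁻¹ ‖F(0)‖_{L¹_α}`. -/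
theorem BBGKY_series_convergence_estimate
    (W : ℕ → Type*) [∀ s, NormedAddCommGroup (W s)] [∀ s, NormedSpace ℝ (W s)]
    [∀ s, CompleteSpace (W s)]
    (α : ℝ) (hα : Real.exp 1 < α)
    (Op : (s : ℕ) → (n : ℕ) → W (s + n) →L[ℝ] W s)
    (hOp : ∀ s n : ℕ, ‖Op s n‖ ≤ n.factorial * Real.exp (n + 2))
    (F0 : (s : ℕ) → W s)
    (hF0 : Summable fun n => α ^ n * ‖F0 n‖) :
    (∀ s : ℕ, Summable fun n => ((1 : ℝ) / n.factorial) • Op s n (F0 (s + n))) ∧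
    (Summable fun s =>
      α ^ s * ‖∑' n : ℕ, ((1 : ℝ) / n.factorial) • Op s n (F0 (s + n))‖) ∧
    (∑' s : ℕ, α ^ s * ‖∑' n : ℕ, ((1 : ℝ) / n.factorial) • Op s n (F0 (s + n))‖)
      ≤ Real.exp 2 * (1 - Real.exp 1 / α)⁻¹ * ∑' n : ℕ, α ^ n * ‖F0 n‖ := by
  have he : (0:ℝ) < Real.exp 1 := Real.exp_pos 1
  have hα0 : (0:ℝ) < α := he.trans hα
  set q : ℝ := Real.exp 1 / α with hqdef
  have hq0 : 0 ≤ q := by positivity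
  have hq1 : q < 1 := (div_lt_one hα0).mpr hα
  set c : ℕ → ℝ := fun m => α ^ m * ‖F0 m‖ with hcdef
  have hc0 : ∀ m, 0 ≤ c m := fun m => by positivity
  have hcs : Summable c := hF0
  set C : ℝ := ∑' m, c m with hCdef
  have hcC : ∀ m, c m ≤ C := fun m => Summable.le_tsum hcs m (fun j _ => hc0 j)
  have hC0 : 0 ≤ C := tsum_nonneg hc0
  set F : ℕ → ℕ → ℝ := fun n s => q ^ n * c (s + n) with hFdef
  have hF0' : ∀ n s, 0 ≤ F n s := fun n s => mul_nonneg (pow_nonneg hq0 n) (hc0 _)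
  -- pointwise key bound
  have hkey : ∀ s n : ℕ, α ^ s * ‖((1:ℝ)/n.factorial) • Op s n (F0 (s+n))‖
      ≤ Real.exp 2 * F n s := by
    intro s n
    have hfac : (0:ℝ) < (n.factorial:ℝ) := by positivity
    have h1 : ‖((1:ℝ)/n.factorial) • Op s n (F0 (s+n))‖
        ≤ Real.exp (n+2) * ‖F0 (s+n)‖ := by
      rw [norm_smul, Real.norm_eq_abs, abs_of_pos (by positivity)]
      calc 1/(n.factorial:ℝ) * ‖Op s n (F0 (s+n))‖
          ≤ 1/(n.factorial:ℝ) * (((n.factorial:ℝ) * Real.exp (n+2)) * ‖F0 (s+n)‖) := by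
            apply mul_le_mul_of_nonneg_left _ (by positivity)
            exact ((Op s n).le_opNorm _).trans
              (mul_le_mul_of_nonneg_right (hOp s n) (norm_nonneg _))
        _ = Real.exp (n+2) * ‖F0 (s+n)‖ := by field_simp
    have h2 : α ^ s * (Real.exp (n+2) * ‖F0 (s+n)‖) = Real.exp 2 * F n s := by
      have hqα : q * α = Real.exp 1 := div_mul_cancel₀ _ hα0.ne'
      have he2 : Real.exp ((n:ℝ)+2) = Real.exp 1 ^ n * Real.exp 2 := by
        rw [Real.exp_one_pow, ← Real.exp_add]
      rw [he2, ← hqα, hFdef]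
      simp only [hcdef, mul_pow, pow_add]
      ring
    calc α ^ s * ‖((1:ℝ)/n.factorial) • Op s n (F0 (s+n))‖
        ≤ α ^ s * (Real.exp (n+2) * ‖F0 (s+n)‖) :=
          mul_le_mul_of_nonneg_left h1 (by positivity)
      _ = Real.exp 2 * F n s := h2
  -- summability of slices in s
  have hslice : ∀ n, Summable fun s => F n s := fun n =>
    ((hcs.comp_injective (add_left_injective n)).mul_left _)
  have hslice_le : ∀ n, (∑' s, F n s) ≤ q ^ n * C := by
    intro n
    rw [show (fun s => F n s) = fun s => q ^ n * c (s + n) from rfl, tsum_mul_left]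
    apply mul_le_mul_of_nonneg_left _ (pow_nonneg hq0 n)
    exact Summable.tsum_le_tsum_of_inj (fun s => s + n) (add_left_injective n)
      (fun m _ => hc0 m) (fun s => le_refl _)
      (hcs.comp_injective (add_left_injective n)) hcs
  have hsums : Summable fun n => ∑' s, F n s :=
    Summable.of_nonneg_of_le (fun n => tsum_nonneg (fun s => hF0' n s)) hslice_le
      ((summable_geometric_of_lt_one hq0 hq1).mul_right C)
  have hFsum : Summable fun p : ℕ × ℕ => F p.1 p.2 :=
    (summable_prod_of_nonneg (fun p => hF0' p.1 p.2)).mpr ⟨hslice, hsums⟩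
  have hFswap : Summable fun p : ℕ × ℕ => F p.2 p.1 := hFsum.prod_symm
  have hsliceN : ∀ s, Summable fun n => F n s :=
    ((summable_prod_of_nonneg (fun p : ℕ × ℕ => hF0' p.2 p.1)).mp hFswap).1
  have hg : Summable fun s => ∑' n, F n s :=
    ((summable_prod_of_nonneg (fun p : ℕ × ℕ => hF0' p.2 p.1)).mp hFswap).2
  -- Part 1
  have part1 : ∀ s : ℕ, Summable fun n => ((1 : ℝ) / n.factorial) • Op s n (F0 (s + n)) := by
    intro s
    apply Summable.of_norm
    apply Summable.of_nonneg_of_le (fun n => norm_nonneg _) (fun n => ?_)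
      (((hsliceN s).mul_left ((α ^ s)⁻¹ * Real.exp 2)))
    have h3 := hkey s n
    have hαs : (0:ℝ) < α ^ s := by positivity
    calc ‖((1:ℝ)/n.factorial) • Op s n (F0 (s+n))‖
        = (α ^ s)⁻¹ * (α ^ s * ‖((1:ℝ)/n.factorial) • Op s n (F0 (s+n))‖) := by
          field_simp
      _ ≤ (α ^ s)⁻¹ * (Real.exp 2 * F n s) :=
          mul_le_mul_of_nonneg_left h3 (by positivity)
      _ = (α ^ s)⁻¹ * Real.exp 2 * F n s := by ring
  have hnormsum : ∀ s, Summable fun n => ‖((1:ℝ)/n.factorial) • Op s n (F0 (s+n))‖ := by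
    intro s
    apply Summable.of_nonneg_of_le (fun n => norm_nonneg _) (fun n => ?_)
      (((hsliceN s).mul_left ((α ^ s)⁻¹ * Real.exp 2)))
    have h3 := hkey s n
    calc ‖((1:ℝ)/n.factorial) • Op s n (F0 (s+n))‖
        = (α ^ s)⁻¹ * (α ^ s * ‖((1:ℝ)/n.factorial) • Op s n (F0 (s+n))‖) := by
          field_simp
      _ ≤ (α ^ s)⁻¹ * (Real.exp 2 * F n s) :=
          mul_le_mul_of_nonneg_left h3 (by positivity)
      _ = (α ^ s)⁻¹ * Real.exp 2 * F n s := by ring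
  have hnorm : ∀ s, α ^ s * ‖∑' n : ℕ, ((1 : ℝ) / n.factorial) • Op s n (F0 (s + n))‖
      ≤ Real.exp 2 * ∑' n, F n s := by
    intro s
    have h1 : ‖∑' n : ℕ, ((1 : ℝ) / n.factorial) • Op s n (F0 (s + n))‖
        ≤ ∑' n, ‖((1 : ℝ) / n.factorial) • Op s n (F0 (s + n))‖ :=
      norm_tsum_le_tsum_norm (hnormsum s)
    calc α ^ s * ‖∑' n : ℕ, ((1 : ℝ) / n.factorial) • Op s n (F0 (s + n))‖
        ≤ α ^ s * ∑' n, ‖((1 : ℝ) / n.factorial) • Op s n (F0 (s + n))‖ :=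
          mul_le_mul_of_nonneg_left h1 (by positivity)
      _ = ∑' n, α ^ s * ‖((1 : ℝ) / n.factorial) • Op s n (F0 (s + n))‖ :=
          (tsum_mul_left).symm
      _ ≤ ∑' n, Real.exp 2 * F n s :=
          Summable.tsum_le_tsum (fun n => hkey s n) ((hnormsum s).mul_left _)
            ((hsliceN s).mul_left _)
      _ = Real.exp 2 * ∑' n, F n s := tsum_mul_left
  have part2 : Summable fun s =>
      α ^ s * ‖∑' n : ℕ, ((1 : ℝ) / n.factorial) • Op s n (F0 (s + n))‖ :=
    Summable.of_nonneg_of_le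
      (fun s => by positivity) hnorm (hg.mul_left (Real.exp 2))
  refine ⟨part1, part2, ?_⟩
  have step1 : (∑' s : ℕ, α ^ s * ‖∑' n : ℕ, ((1 : ℝ) / n.factorial) • Op s n (F0 (s + n))‖)
      ≤ Real.exp 2 * ∑' s, ∑' n, F n s := by
    rw [← tsum_mul_left]
    exact Summable.tsum_le_tsum hnorm part2 (hg.mul_left _)
  have step2 : (∑' s : ℕ, ∑' n, F n s) = ∑' n, ∑' s, F n s := Summable.tsum_comm hFsum
  have step3 : (∑' n, ∑' s, F n s) ≤ (1 - q)⁻¹ * C := by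
    calc (∑' n, ∑' s, F n s) ≤ ∑' n : ℕ, q ^ n * C :=
          Summable.tsum_le_tsum hslice_le hsums
            ((summable_geometric_of_lt_one hq0 hq1).mul_right C)
      _ = (1 - q)⁻¹ * C := by
          rw [tsum_mul_right, tsum_geometric_of_lt_one hq0 hq1]
  calc (∑' s : ℕ, α ^ s * ‖∑' n : ℕ, ((1 : ℝ) / n.factorial) • Op s n (F0 (s + n))‖)
      ≤ Real.exp 2 * ∑' s, ∑' n, F n s := step1
    _ = Real.exp 2 * ∑' n, ∑' s, F n s := by rw [step2]
    _ ≤ Real.exp 2 * ((1 - q)⁻¹ * C) :=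
        mul_le_mul_of_nonneg_left step3 (Real.exp_pos 2).le
    _ = Real.exp 2 * (1 - Real.exp 1 / α)⁻¹ * ∑' n : ℕ, α ^ n * ‖F0 n‖ := by
        rw [hqdef, hCdef]; ring
end

section
/- For an isometric group of operators S(t) on L¹ with ‖Sₙ(t)‖ = 1, the (1+n)-th order cumulant 𝔄_{1+n}(t, {1,…,s}, s+1,…,s+n) = ∑_{P partition of ({1,…,s}, s+1,…,s+n)} (-1)^{|P|-1}(|P|-1)! ∏_{X∈P} S_{|θ(X)|}(t, θ(X)) satisfies the operator norm bound ‖𝔄_{1+n}(t)‖ ≤ ∑_{k=1}^{n+1} S(n+1,k)(k-1)! ≤ n! e^{n+2}. -/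
/-- The set of partitions of a finite set `Z` into nonempty mutually disjoint blocks. -/
def partitionsOf {ι : Type*} [DecidableEq ι] (Z : Finset ι) : Finset (Finset (Finset ι)) :=
  Z.powerset.powerset.filter
    (fun P => ∅ ∉ P ∧ P.sup id = Z ∧ ∀ X ∈ P, ∀ Y ∈ P, X ≠ Y → X ∩ Y = ∅)

/-- Stirling numbers of the second kind. -/
def stirling : ℕ → ℕ → ℕ
  | 0, 0 => 1
  | 0, _ + 1 => 0
  | _ + 1, 0 => 0
  | n + 1, k + 1 => (k + 1) * stirling n (k + 1) + stirling n k

namespace CumulantAux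
variable {ι : Type*} [DecidableEq ι]

lemma mem_partitionsOf {Z : Finset ι} {P : Finset (Finset ι)} :
    P ∈ partitionsOf Z ↔ (∀ X ∈ P, X ⊆ Z) ∧ ∅ ∉ P ∧ P.sup id = Z ∧
      ∀ X ∈ P, ∀ Y ∈ P, X ≠ Y → X ∩ Y = ∅ := by
  simp only [partitionsOf, Finset.mem_filter, Finset.mem_powerset, and_assoc]
  constructor
  · rintro ⟨h1, h2⟩
    exact ⟨fun X hX => Finset.mem_powerset.mp (h1 hX), h2⟩
  · rintro ⟨h1, h2⟩
    exact ⟨fun X hX => Finset.mem_powerset.mpr (h1 X hX), h2⟩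

lemma notMem_block {Z : Finset ι} {P : Finset (Finset ι)} (hP : P ∈ partitionsOf Z)
    {a : ι} (ha : a ∉ Z) {X : Finset ι} (hX : X ∈ P) : a ∉ X :=
  fun h => ha ((mem_partitionsOf.mp hP).1 X hX h)

lemma image_erase_eq {Q : Finset (Finset ι)} {a : ι} (h : ∀ X ∈ Q, a ∉ X) :
    Q.image (fun X => X.erase a) = Q := by
  rw [Finset.image_congr (g := id), Finset.image_id]
  intro X hX
  exact Finset.erase_eq_of_notMem (h X hX)

/-- remove `a` from a partition -/
def theta (a : ι) (P : Finset (Finset ι)) : Finset (Finset ι) :=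
  (P.image (fun X => X.erase a)).erase ∅

lemma insert_eq_insert {a : ι} {t u : Finset ι} (ht : a ∉ t) (hu : a ∉ u)
    (h : insert a t = insert a u) : t = u := by
  rw [← Finset.erase_insert ht, ← Finset.erase_insert hu, h]

/-- decomposition of a partition of `insert a s` -/
lemma decomp {a : ι} {s : Finset ι} (ha : a ∉ s) {P : Finset (Finset ι)}
    (hP : P ∈ partitionsOf (insert a s)) :
    (∃ Q, Q ∈ partitionsOf s ∧ P = insert {a} Q ∧ theta a P = Q ∧ Q.card + 1 = P.card) ∨
    (∃ Q X, Q ∈ partitionsOf s ∧ X ∈ Q ∧ P = insert (insert a X) (Q.erase X) ∧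
      theta a P = Q ∧ Q.card = P.card) := by
  obtain ⟨hsub, hne, hsup, hdisj⟩ := mem_partitionsOf.mp hP
  have haZ : a ∈ P.sup id := by rw [hsup]; exact Finset.mem_insert_self a s
  obtain ⟨X₀, hX₀P, haX₀⟩ := Finset.mem_sup.mp haZ
  replace haX₀ : a ∈ X₀ := haX₀
  have huniq : ∀ Y ∈ P, a ∈ Y → Y = X₀ := by
    intro Y hY haY
    by_contra hne'
    have := hdisj Y hY X₀ hX₀P hne'
    have : a ∈ Y ∩ X₀ := Finset.mem_inter.mpr ⟨haY, haX₀⟩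
    simp_all
  -- a ∉ any other block
  have hnotin : ∀ Y ∈ P.erase X₀, a ∉ Y := by
    intro Y hY haY
    exact (Finset.ne_of_mem_erase hY) (huniq Y (Finset.mem_of_mem_erase hY) haY)
  have hPsplit : P = insert X₀ (P.erase X₀) := (Finset.insert_erase hX₀P).symm
  have hsupsplit : insert a s = X₀ ∪ (P.erase X₀).sup id := by
    conv_lhs => rw [← hsup, hPsplit]
    rw [Finset.sup_insert]; rfl
  have hasup : a ∉ (P.erase X₀).sup id := by
    intro h
    obtain ⟨Y, hY, haY⟩ := Finset.mem_sup.mp h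
    exact hnotin Y hY haY
  by_cases hX0 : X₀ = {a}
  · -- singleton case
    left
    have hXe : X₀.erase a = ∅ := by rw [hX0]; exact Finset.erase_singleton a
    have hnotinQ : ∅ ∉ P.erase X₀ := fun h => hne (Finset.mem_of_mem_erase h)
    refine ⟨P.erase X₀, ?_, ?_, ?_, ?_⟩
    · rw [mem_partitionsOf]
      refine ⟨?_, hnotinQ, ?_, ?_⟩
      · intro X hX x hx
        rcases Finset.mem_insert.mp (hsub X (Finset.mem_of_mem_erase hX) hx) with h | h
        · exact absurd hx (h ▸ hnotin X hX)
        · exact h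
      · have key : insert a s = insert a ((P.erase X₀).sup id) := by
          rw [hsupsplit, hX0, ← Finset.insert_eq]
        exact (insert_eq_insert ha hasup key).symm
      · intro X hX Y hY hXY
        exact hdisj X (Finset.mem_of_mem_erase hX) Y (Finset.mem_of_mem_erase hY) hXY
    · rw [← hX0]; exact hPsplit
    · unfold theta
      conv_lhs => rw [hPsplit, Finset.image_insert]
      rw [image_erase_eq hnotin, hXe, Finset.erase_insert hnotinQ]
    · rw [Finset.card_erase_of_mem hX₀P]
      have : 1 ≤ P.card := Finset.card_pos.mpr ⟨X₀, hX₀P⟩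
      omega
  · -- block case
    right
    set X := X₀.erase a with hXdef
    have hXne : X ≠ ∅ := by
      intro h
      rcases (Finset.erase_eq_empty_iff X₀ a).mp h with h' | h'
      · exact hne (h' ▸ hX₀P)
      · exact hX0 h'
    have hXsub : X ⊆ s := by
      intro x hx
      have hxX₀ := Finset.mem_of_mem_erase hx
      have hxa := Finset.ne_of_mem_erase hx
      rcases Finset.mem_insert.mp (hsub X₀ hX₀P hxX₀) with h | h
      · exact absurd h hxa
      · exact h
    have hXnotinerase : X ∉ P.erase X₀ := by
      intro h
      have hXP := Finset.mem_of_mem_erase h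
      have hXne' := Finset.ne_of_mem_erase h
      have hd := hdisj X hXP X₀ hX₀P hXne'
      obtain ⟨x, hx⟩ := Finset.nonempty_iff_ne_empty.mpr hXne
      have hxm : x ∈ X ∩ X₀ := Finset.mem_inter.mpr ⟨hx, Finset.mem_of_mem_erase hx⟩
      rw [hd] at hxm
      exact Finset.notMem_empty x hxm
    refine ⟨insert X (P.erase X₀), X, ?_, Finset.mem_insert_self X _, ?_, ?_, ?_⟩
    · rw [mem_partitionsOf]
      refine ⟨?_, ?_, ?_, ?_⟩
      · intro Y hY
        rcases Finset.mem_insert.mp hY with h | h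
        · exact h ▸ hXsub
        · intro x hx
          rcases Finset.mem_insert.mp (hsub Y (Finset.mem_of_mem_erase h) hx) with h' | h'
          · exact absurd hx (h' ▸ hnotin Y h)
          · exact h'
      · intro h
        rcases Finset.mem_insert.mp h with h' | h'
        · exact hXne h'.symm
        · exact hne (Finset.mem_of_mem_erase h')
      · -- sup = s
        rw [Finset.sup_insert]
        have key : insert a (X ⊔ (P.erase X₀).sup id) = insert a s := by
          have : insert a (X ∪ (P.erase X₀).sup id) = (insert a X) ∪ (P.erase X₀).sup id := by
            rw [Finset.insert_union]
          rw [show (X ⊔ (P.erase X₀).sup id) = X ∪ (P.erase X₀).sup id from rfl, this,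
            Finset.insert_erase haX₀, ← hsupsplit]
        have hamem : a ∉ X ⊔ (P.erase X₀).sup id := by
          intro h
          rcases Finset.mem_union.mp h with h' | h'
          · exact Finset.notMem_erase a X₀ h'
          · exact hasup h'
        exact insert_eq_insert hamem ha key
      · intro Y hY Z hZ hYZ
        rcases Finset.mem_insert.mp hY with h1 | h1 <;> rcases Finset.mem_insert.mp hZ with h2 | h2
        · exact absurd (h1.trans h2.symm) hYZ
        · subst h1
          have hd := hdisj X₀ hX₀P Z (Finset.mem_of_mem_erase h2) (Finset.ne_of_mem_erase h2).symm
          have : X ∩ Z ⊆ X₀ ∩ Z := Finset.inter_subset_inter (Finset.erase_subset a X₀) le_rfl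
          rw [hd] at this
          exact Finset.subset_empty.mp this
        · subst h2
          have hd := hdisj Y (Finset.mem_of_mem_erase h1) X₀ hX₀P (Finset.ne_of_mem_erase h1)
          have : Y ∩ X ⊆ Y ∩ X₀ := Finset.inter_subset_inter le_rfl (Finset.erase_subset a X₀)
          rw [hd] at this
          exact Finset.subset_empty.mp this
        · exact hdisj Y (Finset.mem_of_mem_erase h1) Z (Finset.mem_of_mem_erase h2) hYZ
    · -- P = insert (insert a X) (Q.erase X)
      rw [Finset.insert_erase haX₀, Finset.erase_insert hXnotinerase]
      exact hPsplit
    · -- theta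
      unfold theta
      conv_lhs => rw [hPsplit, Finset.image_insert]
      rw [image_erase_eq hnotin, ← hXdef]
      rw [Finset.erase_eq_of_notMem]
      intro h
      rcases Finset.mem_insert.mp h with h' | h'
      · exact hXne h'.symm
      · exact hne (Finset.mem_of_mem_erase h')
    · rw [Finset.card_insert_of_notMem hXnotinerase, Finset.card_erase_of_mem hX₀P]
      have : 1 ≤ P.card := Finset.card_pos.mpr ⟨X₀, hX₀P⟩
      omega


lemma insert_singleton_mem {a : ι} {s : Finset ι} (ha : a ∉ s) {Q : Finset (Finset ι)}
    (hQ : Q ∈ partitionsOf s) :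
    insert {a} Q ∈ partitionsOf (insert a s) ∧ theta a (insert {a} Q) = Q ∧
      (insert {a} Q).card = Q.card + 1 := by
  obtain ⟨hsub, hne, hsup, hdisj⟩ := mem_partitionsOf.mp hQ
  have hnotin : ∀ X ∈ Q, a ∉ X := fun X hX => notMem_block hQ ha hX
  have hsQ : ({a} : Finset ι) ∉ Q := fun h => hnotin _ h (Finset.mem_singleton_self a)
  refine ⟨?_, ?_, Finset.card_insert_of_notMem hsQ⟩
  · rw [mem_partitionsOf]
    refine ⟨?_, ?_, ?_, ?_⟩
    · intro X hX
      rcases Finset.mem_insert.mp hX with h | h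
      · subst h
        intro x hx
        rw [Finset.mem_singleton] at hx
        rw [hx]
        exact Finset.mem_insert_self a s
      · exact (hsub X h).trans (Finset.subset_insert a s)
    · intro h
      rcases Finset.mem_insert.mp h with h | h
      · exact Finset.singleton_ne_empty a h.symm
      · exact hne h
    · rw [Finset.sup_insert]
      show ({a} : Finset ι) ∪ Q.sup id = insert a s
      rw [hsup, ← Finset.insert_eq]
    · intro X hX Y hY hXY
      rcases Finset.mem_insert.mp hX with h1 | h1 <;> rcases Finset.mem_insert.mp hY with h2 | h2
      · exact absurd (h1.trans h2.symm) hXY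
      · subst h1
        apply Finset.eq_empty_of_forall_notMem
        intro x hx
        rcases Finset.mem_inter.mp hx with ⟨h3, h4⟩
        rw [Finset.mem_singleton] at h3
        subst h3
        exact hnotin Y h2 h4
      · subst h2
        apply Finset.eq_empty_of_forall_notMem
        intro x hx
        rcases Finset.mem_inter.mp hx with ⟨h3, h4⟩
        rw [Finset.mem_singleton] at h4
        subst h4
        exact hnotin X h1 h3
      · exact hdisj X h1 Y h2 hXY
  · unfold theta
    rw [Finset.image_insert, image_erase_eq hnotin, Finset.erase_singleton,
      Finset.erase_insert hne]

lemma insert_block_mem' {a : ι} {s : Finset ι} (ha : a ∉ s) {Q : Finset (Finset ι)}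
    {X : Finset ι} (hQ : Q ∈ partitionsOf s) (hX : X ∈ Q) :
    insert (insert a X) (Q.erase X) ∈ partitionsOf (insert a s) ∧
      theta a (insert (insert a X) (Q.erase X)) = Q ∧
      (insert (insert a X) (Q.erase X)).card = Q.card := by
  obtain ⟨hsub, hne, hsup, hdisj⟩ := mem_partitionsOf.mp hQ
  have hnotin : ∀ Y ∈ Q, a ∉ Y := fun Y hY => notMem_block hQ ha hY
  have haX : a ∉ X := hnotin X hX
  have hins : insert a X ∉ Q.erase X := fun h =>
    hnotin _ (Finset.mem_of_mem_erase h) (Finset.mem_insert_self a X)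
  have hQsplit : Q = insert X (Q.erase X) := (Finset.insert_erase hX).symm
  refine ⟨?_, ?_, ?_⟩
  · rw [mem_partitionsOf]
    refine ⟨?_, ?_, ?_, ?_⟩
    · intro Y hY
      rcases Finset.mem_insert.mp hY with h | h
      · subst h
        exact Finset.insert_subset_insert a (hsub X hX)
      · exact (hsub Y (Finset.mem_of_mem_erase h)).trans (Finset.subset_insert a s)
    · intro h
      rcases Finset.mem_insert.mp h with h | h
      · exact (Finset.insert_ne_empty a X) h.symm
      · exact hne (Finset.mem_of_mem_erase h)
    · rw [Finset.sup_insert]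
      show (insert a X) ∪ (Q.erase X).sup id = insert a s
      rw [Finset.insert_union, ← hsup]
      conv_rhs => rw [hQsplit, Finset.sup_insert]
      rfl
    · intro Y hY Z hZ hYZ
      rcases Finset.mem_insert.mp hY with h1 | h1 <;> rcases Finset.mem_insert.mp hZ with h2 | h2
      · exact absurd (h1.trans h2.symm) hYZ
      · subst h1
        have hd := hdisj X hX Z (Finset.mem_of_mem_erase h2) (Finset.ne_of_mem_erase h2).symm
        apply Finset.eq_empty_of_forall_notMem
        intro x hx
        rcases Finset.mem_inter.mp hx with ⟨h3, h4⟩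
        rcases Finset.mem_insert.mp h3 with h5 | h5
        · subst h5
          exact hnotin Z (Finset.mem_of_mem_erase h2) h4
        · have hxm : x ∈ X ∩ Z := Finset.mem_inter.mpr ⟨h5, h4⟩
          rw [hd] at hxm
          exact Finset.notMem_empty x hxm
      · subst h2
        have hd := hdisj Y (Finset.mem_of_mem_erase h1) X hX (Finset.ne_of_mem_erase h1)
        apply Finset.eq_empty_of_forall_notMem
        intro x hx
        rcases Finset.mem_inter.mp hx with ⟨h3, h4⟩
        rcases Finset.mem_insert.mp h4 with h5 | h5
        · subst h5
          exact hnotin Y (Finset.mem_of_mem_erase h1) h3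
        · have hxm : x ∈ Y ∩ X := Finset.mem_inter.mpr ⟨h3, h5⟩
          rw [hd] at hxm
          exact Finset.notMem_empty x hxm
      · exact hdisj Y (Finset.mem_of_mem_erase h1) Z (Finset.mem_of_mem_erase h2) hYZ
  · unfold theta
    rw [Finset.image_insert, Finset.erase_insert haX,
      image_erase_eq (fun Y hY => hnotin Y (Finset.mem_of_mem_erase hY)), ← hQsplit,
      Finset.erase_eq_of_notMem hne]
  · rw [Finset.card_insert_of_notMem hins, Finset.card_erase_of_mem hX]
    have : 1 ≤ Q.card := Finset.card_pos.mpr ⟨X, hX⟩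
    omega

lemma g_injOn {a : ι} {s : Finset ι} (ha : a ∉ s) {Q : Finset (Finset ι)}
    (hQ : Q ∈ partitionsOf s) :
    Set.InjOn (fun X => insert (insert a X) (Q.erase X)) ↑Q := by
  intro X hX Y hY h
  simp only at h
  have haX : a ∉ X := notMem_block hQ ha (Finset.mem_coe.mp hX)
  have haY : a ∉ Y := notMem_block hQ ha (Finset.mem_coe.mp hY)
  have hm : insert a X ∈ insert (insert a Y) (Q.erase Y) := h ▸ Finset.mem_insert_self _ _
  rcases Finset.mem_insert.mp hm with h1 | h1
  · rw [← Finset.erase_insert haX, ← Finset.erase_insert haY, h1]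
  · exact absurd (Finset.mem_insert_self a X)
      (notMem_block hQ ha (Finset.mem_of_mem_erase h1))

lemma fiber_eq {a : ι} {s : Finset ι} (ha : a ∉ s) {Q : Finset (Finset ι)}
    (hQ : Q ∈ partitionsOf s) (k : ℕ) :
    ((partitionsOf (insert a s)).filter (fun P => P.card = k + 1)).filter
        (fun P => theta a P = Q) =
      if Q.card = k then {insert ({a} : Finset ι) Q}
      else if Q.card = k + 1 then Q.image (fun X => insert (insert a X) (Q.erase X))
      else ∅ := by
  ext P
  simp only [Finset.mem_filter, and_assoc]
  constructor
  · rintro ⟨hP, hcard, htheta⟩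
    rcases decomp ha hP with ⟨Q', hQ', hPeq, ht, hc⟩ | ⟨Q', X, hQ', hXQ', hPeq, ht, hc⟩
    · have hQQ : Q' = Q := by rw [← ht, htheta]
      subst hQQ
      rw [if_pos (by omega), Finset.mem_singleton]
      exact hPeq
    · have hQQ : Q' = Q := by rw [← ht, htheta]
      subst hQQ
      rw [if_neg (by omega), if_pos (by omega)]
      exact Finset.mem_image.mpr ⟨X, hXQ', hPeq.symm⟩
  · intro hmem
    by_cases h1 : Q.card = k
    · rw [if_pos h1, Finset.mem_singleton] at hmem
      subst hmem
      obtain ⟨hm, ht, hc⟩ := insert_singleton_mem ha hQ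
      exact ⟨hm, by omega, ht⟩
    · rw [if_neg h1] at hmem
      by_cases h2 : Q.card = k + 1
      · rw [if_pos h2, Finset.mem_image] at hmem
        obtain ⟨X, hX, rfl⟩ := hmem
        obtain ⟨hm, ht, hc⟩ := insert_block_mem' ha hQ hX
        exact ⟨hm, by omega, ht⟩
      · rw [if_neg h2] at hmem
        exact absurd hmem (Finset.notMem_empty P)

lemma partitionsOf_empty : partitionsOf (∅ : Finset ι) = {∅} := by
  ext P
  rw [mem_partitionsOf, Finset.mem_singleton]
  constructor
  · rintro ⟨hsub, hne, hsup, _⟩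
    rw [Finset.eq_empty_iff_forall_notMem]
    intro X hX
    have h := hsub X hX
    rw [Finset.subset_empty] at h
    exact hne (h ▸ hX)
  · rintro rfl
    exact ⟨fun X hX => absurd hX (Finset.notMem_empty X), Finset.notMem_empty ∅,
      Finset.sup_empty, fun X hX => absurd hX (Finset.notMem_empty X)⟩

lemma card_filter_partitionsOf (s : Finset ι) :
    ∀ k, ((partitionsOf s).filter (fun P => P.card = k)).card = stirling s.card k := by
  induction s using Finset.induction_on with
  | empty =>
    intro k
    rw [partitionsOf_empty]
    cases k with
    | zero => simp [stirling, Finset.filter_singleton]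
    | succ k => simp [stirling, Finset.filter_singleton]
  | @insert a s ha ih =>
    intro k
    rw [Finset.card_insert_of_notMem ha]
    cases k with
    | zero =>
      rw [show stirling (s.card + 1) 0 = 0 from rfl, Finset.card_eq_zero,
        Finset.filter_eq_empty_iff]
      intro P hP hc
      obtain ⟨_, _, hsup, _⟩ := mem_partitionsOf.mp hP
      rw [Finset.card_eq_zero] at hc
      subst hc
      rw [Finset.sup_empty] at hsup
      exact (Finset.insert_ne_empty a s) hsup.symm
    | succ k =>
      have hmap : ∀ P ∈ (partitionsOf (insert a s)).filter (fun P => P.card = k + 1),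
          theta a P ∈ partitionsOf s := by
        intro P hP
        rcases decomp ha (Finset.mem_filter.mp hP).1 with ⟨Q, hQ, _, ht, _⟩ |
          ⟨Q, X, hQ, _, _, ht, _⟩
        · rw [ht]; exact hQ
        · rw [ht]; exact hQ
      rw [Finset.card_eq_sum_card_fiberwise hmap]
      have hfib : ∀ Q ∈ partitionsOf s,
          (((partitionsOf (insert a s)).filter (fun P => P.card = k + 1)).filter
            (fun P => theta a P = Q)).card =
          (if Q.card = k then 1 else 0) + (if Q.card = k + 1 then k + 1 else 0) := by
        intro Q hQ
        rw [fiber_eq ha hQ k]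
        by_cases h1 : Q.card = k
        · rw [if_pos h1, if_pos h1, if_neg (by omega)]
          simp
        · rw [if_neg h1, if_neg h1]
          by_cases h2 : Q.card = k + 1
          · rw [if_pos h2, if_pos h2, Finset.card_image_of_injOn (g_injOn ha hQ), h2]
            omega
          · rw [if_neg h2, if_neg h2]
            simp
      rw [Finset.sum_congr rfl hfib, Finset.sum_add_distrib, ← Finset.sum_filter,
        ← Finset.sum_filter, Finset.sum_const, Finset.sum_const, smul_eq_mul, smul_eq_mul,
        ih k, ih (k + 1),
        show stirling (s.card + 1) (k + 1)
          = (k + 1) * stirling s.card (k + 1) + stirling s.card k from rfl]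
      ring


lemma sum_choose_stirling (m : ℕ) : ∀ k, ∑ j ∈ Finset.range (k + 1),
    k.choose j * (stirling m j * j.factorial) = k ^ m := by
  induction m with
  | zero =>
    intro k
    rw [Finset.sum_eq_single 0]
    · simp [stirling]
    · intro j hj hj0
      obtain ⟨j, rfl⟩ := Nat.exists_eq_succ_of_ne_zero hj0
      simp [stirling]
    · intro h
      exact absurd (Finset.mem_range.mpr (by omega)) h
  | succ m ih =>
    intro k
    have term : ∀ j : ℕ, k.choose (j+1) * (stirling (m+1) (j+1) * (j+1).factorial)
        = (j+1) * (k.choose (j+1) * (stirling m (j+1) * (j+1).factorial))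
          + (k - j) * (k.choose j * (stirling m j * j.factorial)) := by
      intro j
      have hc := Nat.choose_succ_right_eq k j
      rw [show stirling (m+1) (j+1) = (j+1) * stirling m (j+1) + stirling m j from rfl]
      rw [Nat.factorial_succ]
      calc k.choose (j+1) * (((j+1) * stirling m (j+1) + stirling m j) * ((j+1) * j.factorial))
          = (j+1) * (k.choose (j+1) * (stirling m (j+1) * ((j+1) * j.factorial)))
            + (k.choose (j+1) * (j+1)) * (stirling m j * j.factorial) := by ring
        _ = (j+1) * (k.choose (j+1) * (stirling m (j+1) * ((j+1) * j.factorial)))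
            + (k.choose j * (k - j)) * (stirling m j * j.factorial) := by rw [hc]
        _ = (j+1) * (k.choose (j+1) * (stirling m (j+1) * ((j+1) * j.factorial)))
            + (k - j) * (k.choose j * (stirling m j * j.factorial)) := by ring
    calc ∑ j ∈ Finset.range (k + 1), k.choose j * (stirling (m+1) j * j.factorial)
        = ∑ j ∈ Finset.range k, k.choose (j+1) * (stirling (m+1) (j+1) * (j+1).factorial)
            + k.choose 0 * (stirling (m+1) 0 * Nat.factorial 0) := Finset.sum_range_succ' _ k
      _ = ∑ j ∈ Finset.range k, ((j+1) * (k.choose (j+1) * (stirling m (j+1) * (j+1).factorial))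
            + (k - j) * (k.choose j * (stirling m j * j.factorial))) := by
          rw [show stirling (m+1) 0 = 0 from rfl]
          simp only [Nat.mul_zero, Nat.zero_mul, Nat.add_zero]
          exact Finset.sum_congr rfl fun j _ => term j
      _ = (∑ j ∈ Finset.range k, (j+1) * (k.choose (j+1) * (stirling m (j+1) * (j+1).factorial)))
            + ∑ j ∈ Finset.range k, (k - j) * (k.choose j * (stirling m j * j.factorial)) :=
          Finset.sum_add_distrib
      _ = (∑ j ∈ Finset.range (k+1), j * (k.choose j * (stirling m j * j.factorial)))
            + ∑ j ∈ Finset.range (k+1), (k - j) * (k.choose j * (stirling m j * j.factorial)) := by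
          rw [Finset.sum_range_succ'
              (fun j => j * (k.choose j * (stirling m j * j.factorial))) k,
            Finset.sum_range_succ
              (fun j => (k - j) * (k.choose j * (stirling m j * j.factorial))) k]
          simp
      _ = ∑ j ∈ Finset.range (k+1), k * (k.choose j * (stirling m j * j.factorial)) := by
          rw [← Finset.sum_add_distrib]
          refine Finset.sum_congr rfl fun j hj => ?_
          rw [Finset.mem_range] at hj
          rw [← Nat.add_mul, show j + (k - j) = k from by omega]
      _ = k * k ^ m := by rw [← Finset.mul_sum, ih k]
      _ = k ^ (m+1) := by rw [pow_succ]; ring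

lemma stirling_mul_factorial_le (m k : ℕ) : stirling m k * k.factorial ≤ k ^ m := by
  calc stirling m k * k.factorial = k.choose k * (stirling m k * k.factorial) := by
        rw [Nat.choose_self, Nat.one_mul]
    _ ≤ ∑ j ∈ Finset.range (k+1), k.choose j * (stirling m j * j.factorial) :=
        Finset.single_le_sum (f := fun j => k.choose j * (stirling m j * j.factorial))
          (fun j _ => Nat.zero_le _) (Finset.mem_range.mpr (by omega))
    _ = k ^ m := sum_choose_stirling m k

lemma stirling_succ_mul_le (n j : ℕ) :
    stirling (n + 1) (j + 1) * j.factorial ≤ (j + 1) ^ n := by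
  have h := stirling_mul_factorial_le (n + 1) (j + 1)
  rw [Nat.factorial_succ] at h
  have h2 : (j + 1) * (stirling (n+1) (j+1) * j.factorial) ≤ (j+1) * (j+1) ^ n := by
    calc (j + 1) * (stirling (n+1) (j+1) * j.factorial)
        = stirling (n+1) (j+1) * ((j+1) * j.factorial) := by ring
      _ ≤ (j+1) ^ (n+1) := h
      _ = (j+1) * (j+1) ^ n := by rw [pow_succ]; ring
  exact Nat.le_of_mul_le_mul_left h2 (by omega)

lemma sum_exp_le (m : ℕ) :
    ∑ k ∈ Finset.Icc 1 m, Real.exp (k : ℝ) ≤ Real.exp ((m : ℝ) + 1) := by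
  induction m with
  | zero => simp [Real.exp_nonneg]
  | succ m ih =>
    rw [Finset.sum_Icc_succ_top (Nat.le_add_left 1 m)]
    have h2 : (2 : ℝ) ≤ Real.exp 1 := by
      have := Real.add_one_le_exp (1 : ℝ)
      linarith
    have hpos := Real.exp_pos ((m : ℝ) + 1)
    have e1 : (((m + 1 : ℕ)) : ℝ) = (m : ℝ) + 1 := by push_cast; ring
    calc ∑ k ∈ Finset.Icc 1 m, Real.exp (k : ℝ) + Real.exp (((m + 1 : ℕ)) : ℝ)
        ≤ Real.exp ((m:ℝ) + 1) + Real.exp ((m:ℝ) + 1) := by rw [e1]; linarith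
      _ = 2 * Real.exp ((m:ℝ) + 1) := by ring
      _ ≤ Real.exp 1 * Real.exp ((m:ℝ) + 1) := by nlinarith
      _ = Real.exp (((m + 1 : ℕ) : ℝ) + 1) := by rw [← Real.exp_add, e1]; ring_nf

lemma card_mem_Icc {n : ℕ} {P : Finset (Finset (Fin (n+1)))}
    (hP : P ∈ partitionsOf (Finset.univ : Finset (Fin (n+1)))) :
    P.card ∈ Finset.Icc 1 (n + 1) := by
  obtain ⟨hsub, hne, hsup, hdisj⟩ := mem_partitionsOf.mp hP
  have h1 : 1 ≤ P.card := by
    rw [Nat.succ_le_iff, Finset.card_pos]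
    have h0 : (0 : Fin (n+1)) ∈ P.sup id := by rw [hsup]; exact Finset.mem_univ _
    obtain ⟨X, hX, _⟩ := Finset.mem_sup.mp h0
    exact ⟨X, hX⟩
  have h2 : P.card ≤ n + 1 := by
    have hd : ∀ X ∈ P, ∀ Y ∈ P, X ≠ Y → Disjoint X Y := by
      intro X hX Y hY hXY
      rw [Finset.disjoint_iff_inter_eq_empty]
      exact hdisj X hX Y hY hXY
    calc P.card = ∑ _X ∈ P, 1 := by rw [Finset.sum_const, smul_eq_mul, Nat.mul_one]
      _ ≤ ∑ X ∈ P, X.card := Finset.sum_le_sum fun X hX =>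
          Nat.one_le_iff_ne_zero.mpr (fun h => hne (Finset.card_eq_zero.mp h ▸ hX))
      _ = (P.biUnion id).card := (Finset.card_biUnion hd).symm
      _ = (Finset.univ : Finset (Fin (n+1))).card := by rw [← Finset.sup_eq_biUnion, hsup]
      _ = n + 1 := by rw [Finset.card_univ, Fintype.card_fin]
  exact Finset.mem_Icc.mpr ⟨h1, h2⟩

end CumulantAux


/-- For an isometric group of operators, the `(1+n)`-th order cumulant
`𝔄_{1+n}(t) = ∑_{P partition of the (n+1)-element index set} (-1)^(|P|-1) (|P|-1)! ∏_{X∈P} S(t)`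
(where the product of groups of operators `O P` over a partition `P` has norm at most `1`)
satisfies `‖𝔄_{1+n}(t)‖ ≤ ∑_{k=1}^{n+1} S(n+1,k) (k-1)! ≤ n! e^(n+2)`. -/
theorem cumulant_norm_bound {E : Type*} [NormedAddCommGroup E] [NormedSpace ℝ E]
    (n : ℕ) (O : Finset (Finset (Fin (n + 1))) → E →L[ℝ] E)
    (hO : ∀ P ∈ partitionsOf (Finset.univ : Finset (Fin (n + 1))), ‖O P‖ ≤ 1) :
    ‖∑ P ∈ partitionsOf (Finset.univ : Finset (Fin (n + 1))),
        ((-1 : ℝ) ^ (P.card - 1) * ((P.card - 1).factorial : ℝ)) • O P‖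
        ≤ (∑ k ∈ Finset.Icc 1 (n + 1), (stirling (n + 1) k * (k - 1).factorial : ℕ) : ℝ) ∧
    ((∑ k ∈ Finset.Icc 1 (n + 1), (stirling (n + 1) k * (k - 1).factorial : ℕ) : ℕ) : ℝ)
      ≤ n.factorial * Real.exp (n + 2) := by
  classical
  constructor
  · -- part 1
    set B := partitionsOf (Finset.univ : Finset (Fin (n + 1))) with hB
    have hgroup : ∑ P ∈ B, (((P.card - 1).factorial : ℕ) : ℝ)
        = ∑ k ∈ Finset.Icc 1 (n + 1), ((stirling (n + 1) k * (k - 1).factorial : ℕ) : ℝ) := by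
      rw [← Finset.sum_fiberwise_of_maps_to (fun P hP => CumulantAux.card_mem_Icc hP)
          (fun P => (((P.card - 1).factorial : ℕ) : ℝ))]
      refine Finset.sum_congr rfl fun k _ => ?_
      calc ∑ P ∈ B.filter (fun P => P.card = k), (((P.card - 1).factorial : ℕ) : ℝ)
          = ∑ _P ∈ B.filter (fun P => P.card = k), (((k - 1).factorial : ℕ) : ℝ) := by
            refine Finset.sum_congr rfl fun P hP => ?_
            rw [(Finset.mem_filter.mp hP).2]
        _ = ((B.filter (fun P => P.card = k)).card : ℝ) * (((k - 1).factorial : ℕ) : ℝ) := by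
            rw [Finset.sum_const, nsmul_eq_mul]
        _ = ((stirling (n + 1) k * (k - 1).factorial : ℕ) : ℝ) := by
            rw [hB, CumulantAux.card_filter_partitionsOf,
              show (Finset.univ : Finset (Fin (n + 1))).card = n + 1 from by
                rw [Finset.card_univ, Fintype.card_fin]]
            push_cast
            ring
    have hterm : ∀ P ∈ B, ‖((-1 : ℝ) ^ (P.card - 1) * ((P.card - 1).factorial : ℝ)) • O P‖
        ≤ (((P.card - 1).factorial : ℕ) : ℝ) := by
      intro P hP
      have hc : ‖(-1 : ℝ) ^ (P.card - 1) * ((P.card - 1).factorial : ℝ)‖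
          = (((P.card - 1).factorial : ℕ) : ℝ) := by
        rw [Real.norm_eq_abs, abs_mul, abs_pow, abs_neg, abs_one, one_pow, one_mul, Nat.abs_cast]
      calc ‖((-1 : ℝ) ^ (P.card - 1) * ((P.card - 1).factorial : ℝ)) • O P‖
          ≤ ‖(-1 : ℝ) ^ (P.card - 1) * ((P.card - 1).factorial : ℝ)‖ * ‖O P‖ := ContinuousLinearMap.opNorm_smul_le _ _
        _ = (((P.card - 1).factorial : ℕ) : ℝ) * ‖O P‖ := by rw [hc]
        _ ≤ (((P.card - 1).factorial : ℕ) : ℝ) * 1 :=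
            mul_le_mul_of_nonneg_left (hO P hP) (by positivity)
        _ = _ := mul_one _
    calc ‖∑ P ∈ B, ((-1 : ℝ) ^ (P.card - 1) * ((P.card - 1).factorial : ℝ)) • O P‖
        ≤ ∑ P ∈ B, ‖((-1 : ℝ) ^ (P.card - 1) * ((P.card - 1).factorial : ℝ)) • O P‖ :=
          norm_sum_le _ _
      _ ≤ ∑ P ∈ B, (((P.card - 1).factorial : ℕ) : ℝ) := Finset.sum_le_sum hterm
      _ = ∑ k ∈ Finset.Icc 1 (n + 1), ((stirling (n + 1) k * (k - 1).factorial : ℕ) : ℝ) :=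
          hgroup
  · -- part 2
    have step1 : ∀ k ∈ Finset.Icc 1 (n + 1),
        ((stirling (n + 1) k * (k - 1).factorial : ℕ) : ℝ)
          ≤ (n.factorial : ℝ) * Real.exp (k : ℝ) := by
      intro k hk
      obtain ⟨hk1, _⟩ := Finset.mem_Icc.mp hk
      obtain ⟨j, rfl⟩ := Nat.exists_eq_add_of_le' hk1
      have hb : (stirling (n + 1) (j + 1) * ((j + 1) - 1).factorial : ℕ) ≤ (j + 1) ^ n := by
        rw [show (j + 1) - 1 = j from rfl]
        exact CumulantAux.stirling_succ_mul_le n j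
      have hb' : ((stirling (n + 1) (j + 1) * ((j + 1) - 1).factorial : ℕ) : ℝ)
          ≤ (((j + 1 : ℕ)) : ℝ) ^ n := by exact_mod_cast hb
      have hx : (0 : ℝ) ≤ ((j + 1 : ℕ) : ℝ) := Nat.cast_nonneg _
      have he := Real.pow_div_factorial_le_exp _ hx n
      rw [div_le_iff₀ (by positivity)] at he
      exact hb'.trans (he.trans_eq (mul_comm _ _))
    calc ((∑ k ∈ Finset.Icc 1 (n + 1), (stirling (n + 1) k * (k - 1).factorial : ℕ) : ℕ) : ℝ)
        = ∑ k ∈ Finset.Icc 1 (n + 1), ((stirling (n + 1) k * (k - 1).factorial : ℕ) : ℝ) :=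
          Nat.cast_sum _ _
      _ ≤ ∑ k ∈ Finset.Icc 1 (n + 1), (n.factorial : ℝ) * Real.exp (k : ℝ) :=
          Finset.sum_le_sum step1
      _ = (n.factorial : ℝ) * ∑ k ∈ Finset.Icc 1 (n + 1), Real.exp (k : ℝ) := by
          rw [Finset.mul_sum]
      _ ≤ (n.factorial : ℝ) * Real.exp ((n : ℝ) + 2) := by
          have hs := CumulantAux.sum_exp_le (n + 1)
          have hcast : (((n + 1 : ℕ)) : ℝ) + 1 = (n : ℝ) + 2 := by push_cast; ring
          rw [hcast] at hs
          exact mul_le_mul_of_nonneg_left hs (by positivity)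
end
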